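/- Let f, g ∈ ℂ[t] be polynomials of formal degree n = k+1 (coefficient vectors x, y ∈ ℂ^{k+2}). The determinant of the Bézout matrix B(f, g) — the (k+1) × (k+1) matrix with entries B_{ij} = Σ_{m=max(0, i−j)}^{min(i, n−1−j)} p_{(j+m+1),(i−m)}, where p_{a,b} = x_a y_b − x_b y_a are the 2 × 2 minors of the 2 × (k+2) coefficient matrix — equals (up to sign) the resultant of f and g. In particular, det B(f, g) = 0 if and only if f and g have a common root in ℂ or their leading coefficients both vanish. -/

import Mathlib

open Matrix

namespace Stmt16Aux

open Finset Polynomial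

variable {R : Type*} [CommRing R]

/-- the 2×2 minor -/
def pfn (X Y : ℕ → R) (a b : ℕ) : R := X a * Y b - X b * Y a

/-- Bezout matrix -/
def Bmat (k : ℕ) (X Y : ℕ → R) : Matrix (Fin (k+1)) (Fin (k+1)) R :=
  fun i j => ∑ m ∈ Finset.Icc ((i:ℕ) - (j:ℕ)) (min (i:ℕ) (k - (j:ℕ))),
    pfn X Y ((j:ℕ)+m+1) ((i:ℕ)-m)

/-- Sylvester matrix -/
def Smat (k : ℕ) (X Y : ℕ → R) : Matrix (Fin (2*(k+1))) (Fin (2*(k+1))) R :=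
  fun r c => if (r:ℕ) < k+1 then (if (r:ℕ) ≤ (c:ℕ) then X ((c:ℕ)-(r:ℕ)) else 0)
    else (if (r:ℕ) - (k+1) ≤ (c:ℕ) then Y ((c:ℕ) - ((r:ℕ) - (k+1))) else 0)

def S11 (k : ℕ) (X : ℕ → R) : Matrix (Fin (k+1)) (Fin (k+1)) R :=
  fun i j => if (i:ℕ) ≤ (j:ℕ) then X ((j:ℕ)-(i:ℕ)) else 0

def S12 (k : ℕ) (X : ℕ → R) : Matrix (Fin (k+1)) (Fin (k+1)) R :=
  fun i j => X (k+1+(j:ℕ)-(i:ℕ))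

def C21 (k : ℕ) (Y : ℕ → R) : Matrix (Fin (k+1)) (Fin (k+1)) R :=
  fun i j => -Y ((i:ℕ)+(j:ℕ)+1)

def C22 (k : ℕ) (X : ℕ → R) : Matrix (Fin (k+1)) (Fin (k+1)) R :=
  fun i j => X ((i:ℕ)+(j:ℕ)+1)

lemma pfn_swap (X Y : ℕ → R) (a b : ℕ) : pfn X Y a b = - pfn X Y b a := by
  unfold pfn; ring

lemma pfn_big_left {k : ℕ} {X Y : ℕ → R} (hX0 : ∀ m, k+2 ≤ m → X m = 0)
    (hY0 : ∀ m, k+2 ≤ m → Y m = 0) {a : ℕ} (ha : k+2 ≤ a) (b : ℕ) :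
    pfn X Y a b = 0 := by
  simp [pfn, hX0 a ha, hY0 a ha]

lemma pfn_big_right {k : ℕ} {X Y : ℕ → R} (hX0 : ∀ m, k+2 ≤ m → X m = 0)
    (hY0 : ∀ m, k+2 ≤ m → Y m = 0) (a : ℕ) {b : ℕ} (hb : k+2 ≤ b) :
    pfn X Y a b = 0 := by
  simp [pfn, hX0 b hb, hY0 b hb]

/-- reflection trick : a sum of minors along an antidiagonal vanishes -/
lemma refl_sum (X Y : ℕ → R) (a b s t : ℕ) (h : a + s + t = b) :
    ∑ r ∈ Finset.Icc s t, pfn X Y (a+r) (b-r) = 0 := by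
  apply Finset.sum_involution (g := fun r _ => s + t - r)
  · intro r hr
    rw [Finset.mem_Icc] at hr
    have h1 : a + (s + t - r) = b - r := by omega
    have h2 : b - (s + t - r) = a + r := by omega
    rw [h1, h2, pfn_swap]
    ring
  · intro r hr hf hg
    apply hf
    rw [Finset.mem_Icc] at hr
    have : b - r = a + r := by omega
    rw [this, pfn]
    ring
  · intro r hr
    rw [Finset.mem_Icc] at hr ⊢
    omega
  · intro r hr
    rw [Finset.mem_Icc] at hr
    omega

/-- Key identity: bottom-left block of the product is the Bezout matrix. -/
lemma key_B (k : ℕ) (X Y : ℕ → R) (hX0 : ∀ m, k+2 ≤ m → X m = 0)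
    (hY0 : ∀ m, k+2 ≤ m → Y m = 0) :
    C21 k Y * S11 k X + C22 k X * S11 k Y = Bmat k X Y := by
  ext i j
  have hik : (i:ℕ) < k+1 := i.isLt
  have hjk : (j:ℕ) < k+1 := j.isLt
  simp only [Matrix.add_apply, Matrix.mul_apply, C21, C22, S11, Bmat]
  rw [← Finset.sum_add_distrib]
  have h1 : ∀ r : Fin (k+1),
      (-Y ((i:ℕ)+(r:ℕ)+1) * (if (r:ℕ) ≤ (j:ℕ) then X ((j:ℕ)-(r:ℕ)) else 0)
        + X ((i:ℕ)+(r:ℕ)+1) * (if (r:ℕ) ≤ (j:ℕ) then Y ((j:ℕ)-(r:ℕ)) else 0))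
      = if (r:ℕ) ≤ (j:ℕ) then pfn X Y ((i:ℕ)+1+(r:ℕ)) ((j:ℕ)-(r:ℕ)) else 0 := by
    intro r
    split_ifs with h
    · unfold pfn
      have h2 : (i:ℕ)+(r:ℕ)+1 = (i:ℕ)+1+(r:ℕ) := by omega
      rw [h2]; ring
    · ring
  rw [Finset.sum_congr rfl (fun r _ => h1 r)]
  rw [Fin.sum_univ_eq_sum_range
    (fun r => if r ≤ (j:ℕ) then pfn X Y ((i:ℕ)+1+r) ((j:ℕ)-r) else 0) (k+1)]
  rw [← Finset.sum_filter]
  have hfil : (Finset.range (k+1)).filter (· ≤ (j:ℕ)) = Finset.range ((j:ℕ)+1) := by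
    ext a
    simp only [Finset.mem_filter, Finset.mem_range]
    omega
  rw [hfil]
  -- extend the Bezout sum to `Icc (i-j) i`
  rw [Finset.sum_subset
    (show Finset.Icc ((i:ℕ)-(j:ℕ)) (min (i:ℕ) (k-(j:ℕ))) ⊆ Finset.Icc ((i:ℕ)-(j:ℕ)) (i:ℕ) by
      intro m hm; rw [Finset.mem_Icc] at hm ⊢; omega)
    (by
      intro m hm hm2
      rw [Finset.mem_Icc] at hm
      rw [Finset.mem_Icc] at hm2
      exact pfn_big_left hX0 hY0 (by omega) _)]
  -- split the range sum
  rw [Finset.range_eq_Ico,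
    ← Finset.sum_Ico_consecutive _ (Nat.zero_le ((j:ℕ)-(i:ℕ))) (by omega : (j:ℕ)-(i:ℕ) ≤ (j:ℕ)+1)]
  have hlow : ∑ r ∈ Finset.Ico 0 ((j:ℕ)-(i:ℕ)), pfn X Y ((i:ℕ)+1+r) ((j:ℕ)-r) = 0 := by
    rcases Nat.eq_zero_or_pos ((j:ℕ)-(i:ℕ)) with h | h
    · simp [h]
    · have he : Finset.Ico 0 ((j:ℕ)-(i:ℕ)) = Finset.Icc 0 ((j:ℕ)-(i:ℕ)-1) := by
        ext a
        simp only [Finset.mem_Ico, Finset.mem_Icc]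
        omega
      rw [he]
      exact refl_sum X Y ((i:ℕ)+1) (j:ℕ) 0 ((j:ℕ)-(i:ℕ)-1) (by omega)
  rw [hlow, zero_add, Finset.Ico_add_one_right_eq_Icc]
  refine Finset.sum_nbij' (fun r => r + (i:ℕ) - (j:ℕ)) (fun m => m + (j:ℕ) - (i:ℕ))
    ?_ ?_ ?_ ?_ ?_
  · intro r hr; simp only [Finset.mem_Icc] at hr ⊢; omega
  · intro m hm; simp only [Finset.mem_Icc] at hm ⊢; omega
  · intro r hr; simp only [Finset.mem_Icc] at hr
    show r + (i:ℕ) - (j:ℕ) + (j:ℕ) - (i:ℕ) = r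
    omega
  · intro m hm; simp only [Finset.mem_Icc] at hm
    show m + (j:ℕ) - (i:ℕ) + (i:ℕ) - (j:ℕ) = m
    omega
  · intro r hr
    rw [Finset.mem_Icc] at hr
    have e1 : (j:ℕ)+(r+(i:ℕ)-(j:ℕ))+1 = (i:ℕ)+1+r := by omega
    have e2 : (i:ℕ)-(r+(i:ℕ)-(j:ℕ)) = (j:ℕ)-r := by omega
    rw [e1, e2]

/-- Key identity: bottom-right block of the product is zero. -/
lemma key_Z (k : ℕ) (X Y : ℕ → R) (hX0 : ∀ m, k+2 ≤ m → X m = 0)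
    (hY0 : ∀ m, k+2 ≤ m → Y m = 0) :
    C21 k Y * S12 k X + C22 k X * S12 k Y = 0 := by
  ext i j
  have hik : (i:ℕ) < k+1 := i.isLt
  have hjk : (j:ℕ) < k+1 := j.isLt
  simp only [Matrix.add_apply, Matrix.mul_apply, C21, C22, S12, Matrix.zero_apply]
  rw [← Finset.sum_add_distrib]
  have h1 : ∀ r : Fin (k+1),
      (-Y ((i:ℕ)+(r:ℕ)+1) * X (k+1+(j:ℕ)-(r:ℕ)) + X ((i:ℕ)+(r:ℕ)+1) * Y (k+1+(j:ℕ)-(r:ℕ)))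
      = pfn X Y ((i:ℕ)+1+(r:ℕ)) (k+1+(j:ℕ)-(r:ℕ)) := by
    intro r
    unfold pfn
    have h2 : (i:ℕ)+(r:ℕ)+1 = (i:ℕ)+1+(r:ℕ) := by omega
    rw [h2]; ring
  rw [Finset.sum_congr rfl (fun r _ => h1 r)]
  rw [Fin.sum_univ_eq_sum_range (fun r => pfn X Y ((i:ℕ)+1+r) (k+1+(j:ℕ)-r)) (k+1)]
  rw [← Finset.sum_subset
    (show Finset.Icc (j:ℕ) (k-(i:ℕ)) ⊆ Finset.range (k+1) by
      intro r hr; rw [Finset.mem_Icc] at hr; rw [Finset.mem_range]; omega)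
    (by
      intro r hr hr2
      rw [Finset.mem_range] at hr
      rw [Finset.mem_Icc] at hr2
      rcases Nat.lt_or_ge r (j:ℕ) with h | h
      · exact pfn_big_right hX0 hY0 _ (by omega)
      · exact pfn_big_left hX0 hY0 (by omega) _)]
  exact refl_sum X Y ((i:ℕ)+1) (k+1+(j:ℕ)) (j:ℕ) (k-(i:ℕ)) (by omega)

lemma det_S12 (k : ℕ) (X : ℕ → R) (hX0 : ∀ m, k+2 ≤ m → X m = 0) :
    (S12 k X).det = X (k+1) ^ (k+1) := by
  rw [Matrix.det_of_lowerTriangular (S12 k X)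
    (fun i j hij => hX0 _ (by
      have : (i:ℕ) < (j:ℕ) := hij
      omega))]
  have h : ∀ i : Fin (k+1), S12 k X i i = X (k+1) := by
    intro i; simp only [S12]; congr 1; omega
  rw [Finset.prod_congr rfl (fun i _ => h i)]
  simp

/-- the Sylvester matrix is the block matrix, up to reindexing -/
lemma smat_block (k : ℕ) (X Y : ℕ → R) :
    Smat k X Y =
      (Matrix.fromBlocks (S11 k X) (S12 k X) (S11 k Y) (S12 k Y)).submatrix
        (finSumFinEquiv.trans (finCongr (by omega : (k+1)+(k+1) = 2*(k+1)))).symm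
        (finSumFinEquiv.trans (finCongr (by omega : (k+1)+(k+1) = 2*(k+1)))).symm := by
  set e := (finSumFinEquiv.trans (finCongr (by omega : (k+1)+(k+1) = 2*(k+1)))) with he
  have hval : ∀ s : Fin (k+1) ⊕ Fin (k+1), ((e s : Fin (2*(k+1))) : ℕ) =
      Sum.elim (fun i : Fin (k+1) => (i:ℕ)) (fun i : Fin (k+1) => k+1+(i:ℕ)) s := by
    rintro (i | i) <;> simp [he] <;> omega
  ext r c
  rw [Matrix.submatrix_apply]
  rcases hr : e.symm r with i | i <;> rcases hc : e.symm c with j | j <;>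
    have hr0 : r = e (e.symm r) := (Equiv.apply_symm_apply e r).symm <;>
    have hc0 : c = e (e.symm c) := (Equiv.apply_symm_apply e c).symm <;>
    rw [hr] at hr0 <;> rw [hc] at hc0 <;>
    have hr' := hval (e.symm r) <;> have hc' := hval (e.symm c) <;>
    rw [hr] at hr' <;> rw [hc] at hc' <;>
    rw [← hr0] at hr' <;> rw [← hc0] at hc' <;>
    simp only [Sum.elim_inl, Sum.elim_inr] at hr' hc' <;>
    simp only [Smat, Matrix.fromBlocks_apply₁₁, Matrix.fromBlocks_apply₁₂,
      Matrix.fromBlocks_apply₂₁, Matrix.fromBlocks_apply₂₂, S11, S12, hr', hc']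
  all_goals (
    first
      | rw [if_pos (by omega : (i:ℕ) < k+1)]
      | rw [if_neg (by omega : ¬ (k+1+(i:ℕ) < k+1))])
  all_goals (
    first
      | rfl
      | (rw [if_pos (by omega)]; congr 1; omega)
      | (split_ifs with h h' <;> first | (congr 1; omega) | rfl | omega))

/-- main determinant identity over a domain -/
lemma aux1 (k : ℕ) {R : Type*} [CommRing R] [IsDomain R] (X Y : ℕ → R)
    (hX0 : ∀ m, k+2 ≤ m → X m = 0) (hY0 : ∀ m, k+2 ≤ m → Y m = 0) :
    ∃ ε : R, (ε = 1 ∨ ε = -1) ∧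
      X (k+1) ^ (k+1) * (Smat k X Y).det = ε * (X (k+1) ^ (k+1) * (Bmat k X Y).det) := by
  classical
  set a : R := X (k+1) with ha
  set Bm := Bmat k X Y with hBm
  set A := Matrix.fromBlocks (1 : Matrix (Fin (k+1)) (Fin (k+1)) R) (0 : Matrix (Fin (k+1)) (Fin (k+1)) R) (C21 k Y) (C22 k X) with hA
  set S' := Matrix.fromBlocks (S11 k X) (S12 k X) (S11 k Y) (S12 k Y) with hS'
  set P := Matrix.fromBlocks (0 : Matrix (Fin (k+1)) (Fin (k+1)) R)
    (1 : Matrix (Fin (k+1)) (Fin (k+1)) R)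
    (1 : Matrix (Fin (k+1)) (Fin (k+1)) R) (0 : Matrix (Fin (k+1)) (Fin (k+1)) R) with hP
  set D := Matrix.fromBlocks Bm (0 : Matrix (Fin (k+1)) (Fin (k+1)) R) (S11 k X) (S12 k X) with hD
  have hAS : A * S' = P * D := by
    rw [hA, hS', hP, hD, Matrix.fromBlocks_multiply, Matrix.fromBlocks_multiply]
    rw [key_B k X Y hX0 hY0, key_Z k X Y hX0 hY0]
    simp
    exact hBm.symm
  have hPP : P * P = 1 := by
    rw [hP, Matrix.fromBlocks_multiply]
    simp [← Matrix.fromBlocks_one]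
  have hdetP2 : P.det * P.det = 1 := by rw [← Matrix.det_mul, hPP, Matrix.det_one]
  have hdetP : P.det = 1 ∨ P.det = -1 := mul_self_eq_one_iff.mp hdetP2
  have hdetA : A.det = (C22 k X).det := by
    rw [hA, Matrix.det_fromBlocks_zero₁₂, Matrix.det_one, one_mul]
  have hdetD : D.det = Bm.det * a ^ (k+1) := by
    rw [hD, Matrix.det_fromBlocks_zero₁₂, det_S12 k X hX0]
  have hdetS' : S'.det = (Smat k X Y).det := by
    rw [smat_block k X Y, hS', Matrix.det_submatrix_equiv_self]
  -- determinant of C22 via column reversal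
  have hC22eq : C22 k X = (S12 k X)ᵀ.submatrix id (Fin.revPerm : Equiv.Perm (Fin (k+1))) := by
    ext i j
    simp only [C22, S12, Matrix.submatrix_apply, Matrix.transpose_apply, id_eq,
      Fin.revPerm_apply, Fin.val_rev]
    congr 1
    omega
  set s1 : R := ((Equiv.Perm.sign (Fin.revPerm : Equiv.Perm (Fin (k+1))) : ℤ) : R) with hs1
  have hs1pm : s1 = 1 ∨ s1 = -1 := by
    rcases Int.units_eq_one_or (Equiv.Perm.sign (Fin.revPerm : Equiv.Perm (Fin (k+1)))) with h | h <;>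
      rw [hs1, h] <;> simp
  have hs1sq : s1 * s1 = 1 := by rcases hs1pm with h | h <;> rw [h] <;> ring
  have hdetC22 : (C22 k X).det = s1 * a ^ (k+1) := by
    rw [hC22eq, Matrix.det_permute', Matrix.det_transpose, det_S12 k X hX0]
  have main : (s1 * a ^ (k+1)) * (Smat k X Y).det = P.det * (Bm.det * a ^ (k+1)) := by
    have h1 : A.det * S'.det = P.det * D.det := by
      rw [← Matrix.det_mul, ← Matrix.det_mul, hAS]
    rw [hdetA, hdetC22, hdetS', hdetD] at h1
    exact h1
  refine ⟨s1 * P.det, ?_, ?_⟩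
  · rcases hs1pm with h | h <;> rcases hdetP with h2 | h2 <;> rw [h, h2] <;> norm_num
  · linear_combination s1 * main - (a ^ (k+1) * (Smat k X Y).det) * hs1sq

lemma Bmat_map {S : Type*} [CommRing S] (f : R →+* S) (k : ℕ) (X Y : ℕ → R) :
    (Bmat k X Y).map f = Bmat k (fun m => f (X m)) (fun m => f (Y m)) := by
  ext i j
  simp [Bmat, pfn, map_sum, map_sub, _root_.map_mul]

lemma Smat_map {S : Type*} [CommRing S] (f : R →+* S) (k : ℕ) (X Y : ℕ → R) :
    (Smat k X Y).map f = Smat k (fun m => f (X m)) (fun m => f (Y m)) := by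
  ext r c
  simp only [Smat, Matrix.map_apply]
  split_ifs <;> simp

/-- the determinant identity over ℂ, with the leading coefficient cancelled -/
lemma aux1' (k : ℕ) (X Y : ℕ → ℂ)
    (hX0 : ∀ m, k+2 ≤ m → X m = 0) (hY0 : ∀ m, k+2 ≤ m → Y m = 0) :
    ∃ ε : ℂ, (ε = 1 ∨ ε = -1) ∧ (Smat k X Y).det = ε * (Bmat k X Y).det := by
  classical
  set XR : ℕ → Polynomial ℂ :=
    fun m => Polynomial.C (X m) + if m = k+1 then Polynomial.X else 0 with hXR
  set YR : ℕ → Polynomial ℂ := fun m => Polynomial.C (Y m) with hYR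
  obtain ⟨ε, hε, key⟩ := aux1 k XR YR
    (fun m hm => by
      simp only [hXR, hX0 m hm, Polynomial.C_0, zero_add, ite_eq_right_iff]
      intro h; omega)
    (fun m hm => by simp [hYR, hY0 m hm])
  have ha : XR (k+1) ≠ 0 := by
    intro h
    have h2 := congrArg (fun q => Polynomial.coeff q 1) h
    simp [hXR] at h2
  have key2 : (Smat k XR YR).det = ε * (Bmat k XR YR).det := by
    have hpow : XR (k+1) ^ (k+1) ≠ 0 := pow_ne_zero _ ha
    apply mul_left_cancel₀ hpow
    rw [key]
    ring
  set φ : Polynomial ℂ →+* ℂ := Polynomial.evalRingHom 0 with hφ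
  have hφX : ∀ m, φ (XR m) = X m := by
    intro m
    simp only [hXR, hφ, Polynomial.evalRingHom]
    split_ifs <;> simp
  have hφY : ∀ m, φ (YR m) = Y m := by intro m; simp [hYR, hφ]
  refine ⟨φ ε, ?_, ?_⟩
  · rcases hε with h | h <;> rw [h] <;> simp
  · have h3 := congrArg φ key2
    have e1 : (fun m => φ (XR m)) = X := funext hφX
    have e2 : (fun m => φ (YR m)) = Y := funext hφY
    rw [_root_.map_mul, RingHom.map_det, RingHom.map_det, RingHom.mapMatrix_apply,
      RingHom.mapMatrix_apply, Smat_map, Bmat_map, e1, e2] at h3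
    exact h3

noncomputable def pol (N : ℕ) (a : ℕ → ℂ) : Polynomial ℂ :=
  ∑ m ∈ Finset.range N, Polynomial.monomial m (a m)

lemma pol_coeff (N : ℕ) (a : ℕ → ℂ) (j : ℕ) :
    (pol N a).coeff j = if j < N then a j else 0 := by
  simp only [pol, Polynomial.finset_sum_coeff, Polynomial.coeff_monomial]
  simp [Finset.sum_ite_eq, Finset.mem_range]

lemma pol_eval (N : ℕ) (a : ℕ → ℂ) (z : ℂ) :
    (pol N a).eval z = ∑ m ∈ Finset.range N, a m * z^m := by
  simp [pol, Polynomial.eval_finset_sum, Polynomial.eval_monomial]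

lemma pol_natDegree_le (N : ℕ) (a : ℕ → ℂ) : (pol (N+1) a).natDegree ≤ N := by
  rw [Polynomial.natDegree_le_iff_coeff_eq_zero]
  intro M hM
  rw [pol_coeff, if_neg (by omega)]

lemma pol_coeff_full (k : ℕ) (X : ℕ → ℂ) (hX0 : ∀ m, k+2 ≤ m → X m = 0) (j : ℕ) :
    (pol (k+2) X).coeff j = X j := by
  rw [pol_coeff]
  split_ifs with h
  · rfl
  · exact (hX0 j (by omega)).symm

lemma rowsum (k : ℕ) (W : ℕ → ℂ) (hW0 : ∀ m, k+2 ≤ m → W m = 0) (i : ℕ) (hi : i ≤ k)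
    (z : ℂ) (hz : ∑ m ∈ Finset.range (k+2), W m * z^m = 0) :
    ∑ c ∈ Finset.range (2*(k+1)), (if i ≤ c then W (c-i) else 0) * z^c = 0 := by
  simp only [ite_mul, zero_mul]
  rw [← Finset.sum_filter]
  have hfil : (Finset.range (2*(k+1))).filter (i ≤ ·) = Finset.Ico i (2*(k+1)) := by
    ext a
    simp only [Finset.mem_filter, Finset.mem_range, Finset.mem_Ico]
    omega
  rw [hfil, Finset.sum_Ico_eq_sum_range]
  have h1 : ∀ d, W (i+d-i) * z^(i+d) = z^i * (W d * z^d) := by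
    intro d
    rw [Nat.add_sub_cancel_left, pow_add]
    ring
  rw [Finset.sum_congr rfl (fun d _ => h1 d), ← Finset.mul_sum]
  rw [← Finset.sum_subset
    (show Finset.range (k+2) ⊆ Finset.range (2*(k+1)-i) by
      intro d hd; rw [Finset.mem_range] at hd ⊢; omega)
    (by
      intro d hd hd2
      rw [Finset.mem_range] at hd hd2
      rw [hW0 d (by omega)]
      ring)]
  rw [hz, mul_zero]

lemma detS_zero_of_root (k : ℕ) (X Y : ℕ → ℂ)
    (hX0 : ∀ m, k+2 ≤ m → X m = 0) (hY0 : ∀ m, k+2 ≤ m → Y m = 0) (z : ℂ)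
    (hf : ∑ m ∈ Finset.range (k+2), X m * z^m = 0)
    (hg : ∑ m ∈ Finset.range (k+2), Y m * z^m = 0) :
    (Smat k X Y).det = 0 := by
  refine Matrix.exists_mulVec_eq_zero_iff.mp ⟨fun c => z^(c:ℕ), ?_, ?_⟩
  · intro h0
    have h1 := congrFun h0 ⟨0, by omega⟩
    simp at h1
  · funext r
    show (∑ c, Smat k X Y r c * z^(c:ℕ)) = 0
    rcases Nat.lt_or_ge (r:ℕ) (k+1) with h | h
    · have hs : ∀ c : Fin (2*(k+1)), Smat k X Y r c * z^(c:ℕ)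
          = (fun p => (if (r:ℕ) ≤ p then X (p-(r:ℕ)) else 0) * z^p) (c:ℕ) := by
        intro c
        simp only [Smat, if_pos h]
      rw [Finset.sum_congr rfl (fun c _ => hs c),
        Fin.sum_univ_eq_sum_range (fun p => (if (r:ℕ) ≤ p then X (p-(r:ℕ)) else 0) * z^p)]
      exact rowsum k X hX0 (r:ℕ) (by omega) z hf
    · have hs : ∀ c : Fin (2*(k+1)), Smat k X Y r c * z^(c:ℕ)
          = (fun p => (if (r:ℕ)-(k+1) ≤ p then Y (p-((r:ℕ)-(k+1))) else 0) * z^p) (c:ℕ) := by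
        intro c
        simp only [Smat, if_neg (by omega : ¬ ((r:ℕ) < k+1))]
      rw [Finset.sum_congr rfl (fun c _ => hs c),
        Fin.sum_univ_eq_sum_range (fun p => (if (r:ℕ)-(k+1) ≤ p then Y (p-((r:ℕ)-(k+1))) else 0) * z^p)]
      exact rowsum k Y hY0 ((r:ℕ)-(k+1)) (by omega) z hg

lemma detS_zero_of_lead (k : ℕ) (X Y : ℕ → ℂ)
    (hX0 : ∀ m, k+2 ≤ m → X m = 0) (hY0 : ∀ m, k+2 ≤ m → Y m = 0)
    (hx : X (k+1) = 0) (hy : Y (k+1) = 0) :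
    (Smat k X Y).det = 0 := by
  apply Matrix.det_eq_zero_of_column_eq_zero ⟨2*k+1, by omega⟩
  intro r
  simp only [Smat]
  split_ifs with h1 h2 h3
  · by_cases he : 2*k+1-(r:ℕ) = k+1
    · rw [he]; exact hx
    · exact hX0 _ (by omega)
  · rfl
  · by_cases he : 2*k+1-((r:ℕ)-(k+1)) = k+1
    · rw [he]; exact hy
    · exact hY0 _ (by omega)
  · rfl

/-- the block swap on indices -/
def swp (k : ℕ) : Fin (2*(k+1)) → Fin (2*(k+1)) := fun r =>
  if h : (r:ℕ) < k+1 then ⟨(r:ℕ)+(k+1), by omega⟩ else ⟨(r:ℕ)-(k+1), by omega⟩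

lemma swp_val (k : ℕ) (r : Fin (2*(k+1))) :
    ((swp k r : Fin (2*(k+1))) : ℕ) = if (r:ℕ) < k+1 then (r:ℕ)+(k+1) else (r:ℕ)-(k+1) := by
  simp only [swp]
  split_ifs <;> rfl

lemma swp_invol (k : ℕ) : Function.Involutive (swp k) := by
  intro r
  have hr := r.isLt
  have h2 := (swp k r).isLt
  ext
  rw [swp_val k (swp k r), swp_val k r]
  split_ifs <;> omega

/-- the swapped Sylvester system -/
lemma swap_vecMul (k : ℕ) (X Y : ℕ → ℂ) (c : Fin (2*(k+1)) → ℂ)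
    (hvm : Matrix.vecMul c (Smat k X Y) = 0) :
    Matrix.vecMul (fun r : Fin (2*(k+1)) => c (swp k r)) (Smat k Y X) = 0 := by
  classical
  have hsm : ∀ (r j : Fin (2*(k+1))), Smat k Y X r j = Smat k X Y (swp k r) j := by
    intro r j
    have hr := r.isLt
    simp only [Smat, swp_val k r]
    split_ifs <;> first | rfl | omega | (congr 1; omega)
  funext j
  show (∑ r, c (swp k r) * Smat k Y X r j) = 0
  have h1 : ∀ r, c (swp k r) * Smat k Y X r j = c (swp k r) * Smat k X Y (swp k r) j := by
    intro r
    rw [hsm]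
  rw [Finset.sum_congr rfl (fun r _ => h1 r)]
  rw [Function.Bijective.sum_comp (swp_invol k).bijective (fun r => c r * Smat k X Y r j)]
  exact congrFun hvm j

/-- core: a nontrivial kernel vector plus nonvanishing lead coefficient yields a common root -/
lemma core (k : ℕ) (X Y : ℕ → ℂ)
    (hX0 : ∀ m, k+2 ≤ m → X m = 0) (hY0 : ∀ m, k+2 ≤ m → Y m = 0)
    (c : Fin (2*(k+1)) → ℂ) (hc : c ≠ 0)
    (hvm : Matrix.vecMul c (Smat k X Y) = 0) (ha : X (k+1) ≠ 0) :
    ∃ z, (∑ m ∈ Finset.range (k+2), X m * z^m) = 0 ∧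
      (∑ m ∈ Finset.range (k+2), Y m * z^m) = 0 := by
  classical
  set cc : ℕ → ℂ := fun r => if h : r < 2*(k+1) then c ⟨r, h⟩ else 0 with hcc
  have hccv : ∀ r : Fin (2*(k+1)), cc (r:ℕ) = c r := by
    intro r
    simp only [hcc, dif_pos r.isLt]
  set u := pol (k+1) cc with hu
  set v := pol (k+1) (fun r => cc (k+1+r)) with hv
  set f := pol (k+2) X with hf
  set g := pol (k+2) Y with hg
  have hfc : ∀ q, f.coeff q = X q := pol_coeff_full k X hX0
  have hgc : ∀ q, g.coeff q = Y q := pol_coeff_full k Y hY0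
  have huv : u * f + v * g = 0 := by
    apply Polynomial.ext
    intro j
    rw [Polynomial.coeff_add, Polynomial.coeff_zero, Polynomial.coeff_mul, Polynomial.coeff_mul,
      Finset.Nat.sum_antidiagonal_eq_sum_range_succ_mk,
      Finset.Nat.sum_antidiagonal_eq_sum_range_succ_mk,
      ← Finset.sum_add_distrib]
    have hterm : ∀ p, u.coeff p * f.coeff (j-p) + v.coeff p * g.coeff (j-p)
        = if p < k+1 then cc p * X (j-p) + cc (k+1+p) * Y (j-p) else 0 := by
      intro p
      rw [hfc, hgc, hu, hv, pol_coeff, pol_coeff]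
      split_ifs <;> ring
    rw [Finset.sum_congr rfl (fun p _ => hterm p)]
    by_cases hj : j < 2*(k+1)
    · have h0 : (∑ r : Fin (2*(k+1)), c r * Smat k X Y r ⟨j, hj⟩) = 0 := by
        have := congrFun hvm ⟨j, hj⟩
        rwa [Pi.zero_apply] at this
      have h2 : ∀ r : Fin (2*(k+1)), c r * Smat k X Y r ⟨j, hj⟩
          = (fun p => cc p * (if p < k+1 then (if p ≤ j then X (j-p) else 0)
              else (if p-(k+1) ≤ j then Y (j-(p-(k+1))) else 0))) (r:ℕ) := by
        intro r
        rw [← hccv r]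
        rfl
      rw [Finset.sum_congr rfl (fun r _ => h2 r),
        Fin.sum_univ_eq_sum_range (fun p => cc p * (if p < k+1 then (if p ≤ j then X (j-p) else 0)
          else (if p-(k+1) ≤ j then Y (j-(p-(k+1))) else 0))) (2*(k+1))] at h0
      rw [Finset.range_eq_Ico,
        ← Finset.sum_Ico_consecutive _ (Nat.zero_le (k+1)) (by omega : k+1 ≤ 2*(k+1)),
        ← Finset.range_eq_Ico, Finset.sum_Ico_eq_sum_range] at h0
      have hlen : 2*(k+1) - (k+1) = k+1 := by omega
      rw [hlen] at h0
      have h3 : ∀ d ∈ Finset.range (k+1), cc (k+1+d) *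
            (if (k+1+d) < k+1 then (if (k+1+d) ≤ j then X (j-(k+1+d)) else 0)
              else (if (k+1+d)-(k+1) ≤ j then Y (j-((k+1+d)-(k+1))) else 0))
          = cc (k+1+d) * (if d ≤ j then Y (j-d) else 0) := by
        intro d _
        rw [if_neg (by omega), Nat.add_sub_cancel_left]
      have h4 : ∀ p ∈ Finset.range (k+1), cc p *
            (if p < k+1 then (if p ≤ j then X (j-p) else 0)
              else (if p-(k+1) ≤ j then Y (j-(p-(k+1))) else 0))
          = cc p * (if p ≤ j then X (j-p) else 0) := by
        intro p hp
        rw [Finset.mem_range] at hp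
        rw [if_pos hp]
      rw [Finset.sum_congr rfl h3, Finset.sum_congr rfl h4, ← Finset.sum_add_distrib] at h0
      have h5 : ∀ p ∈ Finset.range (k+1),
          (cc p * (if p ≤ j then X (j-p) else 0) + cc (k+1+p) * (if p ≤ j then Y (j-p) else 0))
          = if p ≤ j then cc p * X (j-p) + cc (k+1+p) * Y (j-p) else 0 := by
        intro p _
        split_ifs <;> ring
      rw [Finset.sum_congr rfl h5, ← Finset.sum_filter] at h0
      rw [← Finset.sum_filter]
      have hsets : (Finset.range (j+1)).filter (fun p => p < k+1)
          = (Finset.range (k+1)).filter (fun p => p ≤ j) := by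
        ext a
        simp only [Finset.mem_filter, Finset.mem_range]
        omega
      rw [hsets]
      exact h0
    · apply Finset.sum_eq_zero
      intro p hp
      rw [Finset.mem_range] at hp
      split_ifs with h
      · rw [hX0 (j-p) (by omega), hY0 (j-p) (by omega)]
        ring
      · rfl
  -- nontriviality
  have hune : u ≠ 0 ∨ v ≠ 0 := by
    rcases Function.ne_iff.mp hc with ⟨r, hr⟩
    rw [Pi.zero_apply] at hr
    by_cases h : (r:ℕ) < k+1
    · left
      intro h0
      apply hr
      rw [← hccv r]
      have h1 := congrArg (fun q => Polynomial.coeff q (r:ℕ)) h0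
      simp only [hu, pol_coeff, if_pos h, Polynomial.coeff_zero] at h1
      exact h1
    · right
      intro h0
      apply hr
      rw [← hccv r]
      have h1 := congrArg (fun q => Polynomial.coeff q ((r:ℕ)-(k+1))) h0
      have hr2 := r.isLt
      simp only [hv, pol_coeff, if_pos (show (r:ℕ)-(k+1) < k+1 by omega),
        Polynomial.coeff_zero] at h1
      rwa [show k+1+((r:ℕ)-(k+1)) = (r:ℕ) by omega] at h1
  have hfne : f ≠ 0 := by
    intro h0
    apply ha
    rw [← hfc (k+1), h0, Polynomial.coeff_zero]
  have hfdeg : f.natDegree = k+1 := by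
    apply le_antisymm
    · exact pol_natDegree_le (k+1) X
    · apply Polynomial.le_natDegree_of_ne_zero
      rw [hfc]
      exact ha
  have hvne : v ≠ 0 := by
    intro h0
    rcases hune with h1 | h1
    · have h2 : u * f = 0 := by
        rw [h0] at huv
        simpa using huv
      rcases mul_eq_zero.mp h2 with h3 | h3
      · exact h1 h3
      · exact hfne h3
    · exact h1 h0
  by_contra hno
  push_neg at hno
  have hcop : IsCoprime f g := by
    rw [← EuclideanDomain.gcd_isUnit_iff]
    by_contra hnu
    have hd0 : EuclideanDomain.gcd f g ≠ 0 := by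
      intro h0
      exact hfne (EuclideanDomain.gcd_eq_zero_iff.mp h0).1
    have hdeg : (EuclideanDomain.gcd f g).degree ≠ 0 := by
      intro h0
      exact hnu (Polynomial.isUnit_iff_degree_eq_zero.mpr h0)
    obtain ⟨z, hz⟩ := IsAlgClosed.exists_root (EuclideanDomain.gcd f g) hdeg
    have hz' : (EuclideanDomain.gcd f g).eval z = 0 := hz
    obtain ⟨q1, hq1⟩ := EuclideanDomain.gcd_dvd_left f g
    obtain ⟨q2, hq2⟩ := EuclideanDomain.gcd_dvd_right f g
    have hfz : (∑ m ∈ Finset.range (k+2), X m * z^m) = 0 := by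
      rw [← pol_eval, ← hf, hq1, Polynomial.eval_mul, hz', zero_mul]
    have hgz : (∑ m ∈ Finset.range (k+2), Y m * z^m) = 0 := by
      rw [← pol_eval, ← hg, hq2, Polynomial.eval_mul, hz', zero_mul]
    exact hno z hfz hgz
  have hdvd : f ∣ v := by
    apply hcop.dvd_of_dvd_mul_right
    exact ⟨-u, by linear_combination huv⟩
  have h6 : f.natDegree ≤ v.natDegree := Polynomial.natDegree_le_of_dvd hdvd hvne
  have h7 : v.natDegree ≤ k := pol_natDegree_le k _
  omega

lemma aux2 (k : ℕ) (X Y : ℕ → ℂ)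
    (hX0 : ∀ m, k+2 ≤ m → X m = 0) (hY0 : ∀ m, k+2 ≤ m → Y m = 0) :
    (Smat k X Y).det = 0 ↔
      (∃ z, (∑ m ∈ Finset.range (k+2), X m * z^m) = 0 ∧
        (∑ m ∈ Finset.range (k+2), Y m * z^m) = 0)
      ∨ (X (k+1) = 0 ∧ Y (k+1) = 0) := by
  constructor
  · intro hdet
    by_cases hx : X (k+1) = 0
    · by_cases hy : Y (k+1) = 0
      · exact Or.inr ⟨hx, hy⟩
      · obtain ⟨c, hc, hvm⟩ := Matrix.exists_vecMul_eq_zero_iff.mpr hdet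
        have hsw := swap_vecMul k X Y c hvm
        have hc' : (fun r : Fin (2*(k+1)) => c (swp k r)) ≠ 0 := by
          intro h0
          apply hc
          funext r
          have h1 := congrFun h0 (swp k r)
          simpa [swp_invol k r] using h1
        obtain ⟨z, hgz, hfz⟩ := core k Y X hY0 hX0 _ hc' hsw hy
        exact Or.inl ⟨z, hfz, hgz⟩
    · obtain ⟨c, hc, hvm⟩ := Matrix.exists_vecMul_eq_zero_iff.mpr hdet
      obtain ⟨z, hfz, hgz⟩ := core k X Y hX0 hY0 c hc hvm hx
      exact Or.inl ⟨z, hfz, hgz⟩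
  · rintro (⟨z, hfz, hgz⟩ | ⟨hx, hy⟩)
    · exact detS_zero_of_root k X Y hX0 hY0 z hfz hgz
    · exact detS_zero_of_lead k X Y hX0 hY0 hx hy

end Stmt16Aux

theorem stmt16 (k : ℕ) (x y : Fin (k + 2) → ℂ)
    (X Y : ℕ → ℂ)
    (hX : ∀ m : ℕ, X m = if h : m < k + 2 then x ⟨m, h⟩ else 0)
    (hY : ∀ m : ℕ, Y m = if h : m < k + 2 then y ⟨m, h⟩ else 0)
    (p : ℕ → ℕ → ℂ) (hp : ∀ a b, p a b = X a * Y b - X b * Y a)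
    (Syl : Matrix (Fin (2 * (k + 1))) (Fin (2 * (k + 1))) ℂ)
    (hSyl : ∀ r c : Fin (2 * (k + 1)), Syl r c =
      if (r : ℕ) < k + 1 then
        (if (r : ℕ) ≤ (c : ℕ) then X ((c : ℕ) - (r : ℕ)) else 0)
      else
        (if (r : ℕ) - (k + 1) ≤ (c : ℕ) then Y ((c : ℕ) - ((r : ℕ) - (k + 1))) else 0))
    (B : Matrix (Fin (k + 1)) (Fin (k + 1)) ℂ)
    (hB : ∀ i j : Fin (k + 1), B i j =
      ∑ m ∈ Finset.Icc ((i : ℕ) - (j : ℕ)) (min (i : ℕ) (k - (j : ℕ))),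
        p ((j : ℕ) + m + 1) ((i : ℕ) - m)) :
    (B.det = Syl.det ∨ B.det = -Syl.det) ∧
    (B.det = 0 ↔
      (∃ z : ℂ, (∑ m : Fin (k + 2), x m * z ^ (m : ℕ)) = 0 ∧
        (∑ m : Fin (k + 2), y m * z ^ (m : ℕ)) = 0) ∨
      (x ⟨k + 1, by omega⟩ = 0 ∧ y ⟨k + 1, by omega⟩ = 0)) := by
  have hX0 : ∀ m, k+2 ≤ m → X m = 0 := fun m hm => by rw [hX, dif_neg (by omega)]
  have hY0 : ∀ m, k+2 ≤ m → Y m = 0 := fun m hm => by rw [hY, dif_neg (by omega)]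
  have hBeq : B = Stmt16Aux.Bmat k X Y := by
    ext i j
    rw [hB]
    apply Finset.sum_congr rfl
    intro m _
    rw [hp]
    rfl
  have hSeq : Syl = Stmt16Aux.Smat k X Y := by
    ext r c
    rw [hSyl]
    rfl
  obtain ⟨ε, hε, hkey⟩ := Stmt16Aux.aux1' k X Y hX0 hY0
  rw [← hBeq, ← hSeq] at hkey
  have hε0 : ε ≠ 0 := by rcases hε with h | h <;> rw [h] <;> norm_num
  have hxX : X (k+1) = x ⟨k+1, by omega⟩ := by rw [hX, dif_pos (by omega : k+1 < k+2)]
  have hyY : Y (k+1) = y ⟨k+1, by omega⟩ := by rw [hY, dif_pos (by omega : k+1 < k+2)]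
  have hsum : ∀ (W : ℕ → ℂ) (w : Fin (k+2) → ℂ),
      (∀ m : ℕ, W m = if h : m < k+2 then w ⟨m, h⟩ else 0) →
      ∀ z : ℂ, (∑ m ∈ Finset.range (k+2), W m * z^m) = ∑ m : Fin (k+2), w m * z^(m:ℕ) := by
    intro W w hW z
    rw [← Fin.sum_univ_eq_sum_range (fun m => W m * z^m) (k+2)]
    apply Finset.sum_congr rfl
    intro m _
    rw [hW (m:ℕ), dif_pos m.isLt]
  constructor
  · rcases hε with h | h
    · left
      rw [hkey, h, one_mul]
    · right
      rw [hkey, h]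
      ring
  · have hdetiff : B.det = 0 ↔ Syl.det = 0 := by
      constructor
      · intro h
        rw [hkey, h, mul_zero]
      · intro h
        rw [hkey] at h
        rcases mul_eq_zero.mp h with h1 | h1
        · exact absurd h1 hε0
        · exact h1
    rw [hdetiff, hSeq, Stmt16Aux.aux2 k X Y hX0 hY0]
    constructor
    · rintro (⟨z, h1, h2⟩ | ⟨h1, h2⟩)
      · exact Or.inl ⟨z, by rw [← hsum X x hX z]; exact h1, by rw [← hsum Y y hY z]; exact h2⟩
      · exact Or.inr ⟨by rw [← hxX]; exact h1, by rw [← hyY]; exact h2⟩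
    · rintro (⟨z, h1, h2⟩ | ⟨h1, h2⟩)
      · exact Or.inl ⟨z, by rw [hsum X x hX z]; exact h1, by rw [hsum Y y hY z]; exact h2⟩
      · exact Or.inr ⟨by rw [hxX]; exact h1, by rw [hyY]; exact h2⟩
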